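/- Let S be an 𝔽_q-subspace of 𝔽_{q^n} with dim_{𝔽_q}(S) = k ≥ 2, let μ ∈ 𝔽_{q^n} ∖ 𝔽_q, and let t = dim_{𝔽_q}(𝔽_q(μ)). Suppose dim_{𝔽_q}(S ∩ μS) = k−1 and t ≤ k−1, and write k = tℓ + m with 0 ≤ m < t. Then m > 0, t is a proper divisor of n, and there exist an 𝔽_q(μ)-subspace S̄ of 𝔽_{q^n} with dim_{𝔽_q(μ)}(S̄) = ℓ and an element b ∈ 𝔽_{q^n} ∖ {0} such that b·𝔽_q(μ) ∩ S̄ = {0} and S = S̄ ⊕ b·⟨1, μ, …, μ^{m−1}⟩_{𝔽_q}. -/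

import Mathlib

open Submodule

/-- The span `⟨1, μ, …, μ^{m-1}⟩_{F_q}`. -/
noncomputable def pows (Fq : Type*) {Fqn : Type*} [Field Fq] [Field Fqn] [Algebra Fq Fqn]
    (μ : Fqn) (m : ℕ) : Submodule Fq Fqn :=
  Submodule.span Fq (Set.range fun i : Fin m => μ ^ (i : ℕ))

/-- Multiplication of a subspace by a scalar: `b · W`. -/
noncomputable def bmul (Fq : Type*) {Fqn : Type*} [Field Fq] [Field Fqn] [Algebra Fq Fqn]
    (b : Fqn) (W : Submodule Fq Fqn) : Submodule Fq Fqn :=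
  W.map (LinearMap.mulLeft Fq b)

open Module

section Aux

variable {Fq Fqn : Type*} [Field Fq] [Field Fqn] [Algebra Fq Fqn]

theorem mem_bmul {b x : Fqn} {W : Submodule Fq Fqn} :
    x ∈ bmul Fq b W ↔ ∃ w ∈ W, b * w = x := by
  simp [bmul, Submodule.mem_map, LinearMap.mulLeft_apply]

/-- Multiplication by a nonzero element, as a linear equivalence. -/
noncomputable def mulLE (Fq : Type*) {Fqn : Type*} [Field Fq] [Field Fqn] [Algebra Fq Fqn]
    (b : Fqn) (hb : b ≠ 0) : Fqn ≃ₗ[Fq] Fqn where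
  toFun x := b * x
  map_add' x y := mul_add b x y
  map_smul' c x := mul_smul_comm c b x
  invFun x := b⁻¹ * x
  left_inv x := by show b⁻¹ * (b * x) = x; rw [← mul_assoc, inv_mul_cancel₀ hb, one_mul]
  right_inv x := by show b * (b⁻¹ * x) = x; rw [← mul_assoc, mul_inv_cancel₀ hb, one_mul]

theorem bmul_eq_map (b : Fqn) (hb : b ≠ 0) (W : Submodule Fq Fqn) :
    bmul Fq b W = W.map ((mulLE Fq b hb : Fqn ≃ₗ[Fq] Fqn) : Fqn →ₗ[Fq] Fqn) := by
  ext x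
  simp [bmul, Submodule.mem_map, LinearMap.mulLeft_apply, mulLE]

theorem finrank_bmul (b : Fqn) (hb : b ≠ 0) (W : Submodule Fq Fqn) :
    finrank Fq (bmul Fq b W) = finrank Fq W := by
  rw [bmul_eq_map b hb W]
  exact LinearEquiv.finrank_map_eq (mulLE Fq b hb) W

theorem comap_mulLeft_eq (b : Fqn) (hb : b ≠ 0) (W : Submodule Fq Fqn) :
    W.comap (LinearMap.mulLeft Fq b) = bmul Fq b⁻¹ W := by
  ext x
  simp only [Submodule.mem_comap, LinearMap.mulLeft_apply, mem_bmul]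
  constructor
  · intro h
    exact ⟨b * x, h, by rw [← mul_assoc, inv_mul_cancel₀ hb, one_mul]⟩
  · rintro ⟨w, hw, rfl⟩
    rwa [← mul_assoc, mul_inv_cancel₀ hb, one_mul]

/-- The chain `T j = S ∩ μ⁻¹S ∩ … ∩ μ⁻ʲS`. -/
noncomputable def chT (Fq : Type*) {Fqn : Type*} [Field Fq] [Field Fqn] [Algebra Fq Fqn]
    (μ : Fqn) (S : Submodule Fq Fqn) : ℕ → Submodule Fq Fqn
  | 0 => S
  | j + 1 => chT Fq μ S j ⊓ (chT Fq μ S j).comap (LinearMap.mulLeft Fq μ)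

theorem mem_chT (μ : Fqn) (S : Submodule Fq Fqn) :
    ∀ (j : ℕ) (x : Fqn), x ∈ chT Fq μ S j ↔ ∀ i ≤ j, μ ^ i * x ∈ S
  | 0, x => by
    simp only [chT]
    constructor
    · intro hx i hi
      have : i = 0 := by omega
      subst this
      simpa using hx
    · intro h
      simpa using h 0 le_rfl
  | j + 1, x => by
    simp only [chT, Submodule.mem_inf, Submodule.mem_comap, LinearMap.mulLeft_apply,
      mem_chT μ S j]
    constructor
    · rintro ⟨h1, h2⟩ i hi
      rcases Nat.lt_or_ge i (j + 1) with h | h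
      · exact h1 i (by omega)
      · have hij : i = j + 1 := by omega
        subst hij
        have := h2 j le_rfl
        rwa [show μ ^ j * (μ * x) = μ ^ (j + 1) * x by ring] at this
    · intro h
      refine ⟨fun i hi => h i (by omega), fun i hi => ?_⟩
      rw [show μ ^ i * (μ * x) = μ ^ (i + 1) * x by ring]
      exact h (i + 1) (by omega)

theorem chT_succ_le (μ : Fqn) (S : Submodule Fq Fqn) (j : ℕ) :
    chT Fq μ S (j + 1) ≤ chT Fq μ S j := inf_le_left

theorem chT_mono (μ : Fqn) (S : Submodule Fq Fqn) {i j : ℕ} (hij : i ≤ j) :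
    chT Fq μ S j ≤ chT Fq μ S i := by
  intro x hx
  rw [mem_chT] at hx ⊢
  exact fun i' hi' => hx i' (le_trans hi' hij)

theorem chT_le_self (μ : Fqn) (S : Submodule Fq Fqn) (j : ℕ) :
    chT Fq μ S j ≤ S := by
  intro x hx
  simpa using (mem_chT μ S j x).1 hx 0 (Nat.zero_le _)

theorem chT_stab (μ : Fqn) (S : Submodule Fq Fqn) (j : ℕ)
    (h : chT Fq μ S (j + 1) = chT Fq μ S j) :
    ∀ i, chT Fq μ S (j + i) = chT Fq μ S j
  | 0 => rfl
  | i + 1 => by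
    have ih := chT_stab μ S j h i
    show chT Fq μ S (j + i) ⊓ (chT Fq μ S (j + i)).comap (LinearMap.mulLeft Fq μ)
        = chT Fq μ S j
    rw [ih]
    exact h

end Aux

set_option maxHeartbeats 1000000 in
set_option synthInstance.maxHeartbeats 400000 in
/-- Let `S` be a `k`-dimensional `F_q`-subspace of `F_{q^n}`, `k ≥ 2`,
`μ ∈ F_{q^n} \ F_q`, `t = dim_{F_q} F_q(μ)`. Suppose `dim_{F_q}(S ∩ μS) = k - 1`,
`t ≤ k - 1`, and `k = tℓ + m` with `0 ≤ m < t`. Then `m > 0`, `t` is a proper divisor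
of `n`, and `S = S̄ ⊕ b·⟨1, μ, …, μ^{m-1}⟩_{F_q}` where `S̄` is an `F_q(μ)`-subspace
of dimension `ℓ` over `F_q(μ)` (i.e. of `F_q`-dimension `ℓt`), `b ≠ 0`, and
`b·F_q(μ) ∩ S̄ = {0}`. -/
theorem stmt3 (Fq Fqn : Type*) [Field Fq] [Field Fqn] [Algebra Fq Fqn] [Fintype Fq]
    (q n : ℕ) (hq : Fintype.card Fq = q) (hn : Module.finrank Fq Fqn = n)
    (S : Submodule Fq Fqn) (k : ℕ) (hk : Module.finrank Fq ↥S = k) (hk2 : 2 ≤ k)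
    (μ : Fqn) (hμ : μ ∉ Set.range (algebraMap Fq Fqn))
    (t : ℕ) (ht : Module.finrank Fq ↥(Algebra.adjoin Fq {μ}) = t)
    (hdim : Module.finrank Fq ↥(S ⊓ bmul Fq μ S) = k - 1) (htk : t ≤ k - 1)
    (l m : ℕ) (hklm : k = t * l + m) (hmt : m < t) :
    0 < m ∧ (t ∣ n ∧ t ≠ n) ∧
      ∃ (Sbar : Submodule Fq Fqn) (b : Fqn), b ≠ 0 ∧
        (∀ α ∈ Algebra.adjoin Fq {μ}, ∀ s ∈ Sbar, α * s ∈ Sbar) ∧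
        Module.finrank Fq ↥Sbar = l * t ∧
        Disjoint (bmul Fq b (Subalgebra.toSubmodule (Algebra.adjoin Fq {μ}))) Sbar ∧
        Disjoint Sbar (bmul Fq b (pows Fq μ m)) ∧
        S = Sbar ⊔ bmul Fq b (pows Fq μ m) := by
  have ht0 : 0 < t := by omega
  have hμ0 : μ ≠ 0 := by
    rintro rfl
    exact hμ ⟨0, by simp⟩
  -- basic facts about F = F_q(μ)
  have hμmem : μ ∈ Algebra.adjoin Fq {μ} := Algebra.self_mem_adjoin_singleton Fq μ
  haveI hFfd : FiniteDimensional Fq ↥(Algebra.adjoin Fq {μ}) :=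
    FiniteDimensional.of_finrank_pos (by omega)
  have hint : IsIntegral Fq μ := by
    have h1 : IsIntegral Fq (⟨μ, hμmem⟩ : Algebra.adjoin Fq {μ}) := IsIntegral.of_finite Fq _
    have h2 := h1.map (IsScalarTower.toAlgHom Fq (Algebra.adjoin Fq {μ}) Fqn)
    simpa using h2
  have htdeg : (minpoly Fq μ).natDegree = t := by
    have h := (Algebra.adjoin.powerBasis (K := Fq) hint).finrank
    rw [Algebra.adjoin.powerBasis_dim] at h
    rw [← ht, h]
  have hEF : (IntermediateField.adjoin Fq {μ}).toSubalgebra = Algebra.adjoin Fq {μ} :=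
    IntermediateField.adjoin_simple_toSubalgebra_of_isAlgebraic hint.isAlgebraic
  have hmemE : ∀ x : Fqn, x ∈ Algebra.adjoin Fq {μ} ↔ x ∈ IntermediateField.adjoin Fq {μ} := by
    intro x
    rw [← hEF]
    exact Iff.rfl
  have hEfr : Module.finrank Fq ↥(IntermediateField.adjoin Fq {μ}) = t := by
    rw [IntermediateField.adjoin.finrank hint, htdeg]
  have hli : LinearIndependent Fq fun i : Fin t => μ ^ (i : ℕ) := by
    have h := linearIndependent_pow (K := Fq) μ
    rwa [htdeg] at h
  have hfp : ∀ m', m' ≤ t → Module.finrank Fq ↥(pows Fq μ m') = m' := by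
    intro m' hm'
    have h2 : LinearIndependent Fq fun i : Fin m' => μ ^ (i : ℕ) :=
      hli.comp (Fin.castLE hm') (Fin.castLE_injective hm')
    rw [pows, finrank_span_eq_card h2, Fintype.card_fin]
  have hFsub : Subalgebra.toSubmodule (Algebra.adjoin Fq {μ}) = pows Fq μ t := by
    apply le_antisymm
    · intro x hx
      rw [Subalgebra.mem_toSubmodule, Algebra.adjoin_singleton_eq_range_aeval,
        AlgHom.mem_range] at hx
      obtain ⟨f, rfl⟩ := hx
      have h := hint.mem_span_pow (y := (Polynomial.aeval μ) f) ⟨f, rfl⟩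
      rw [htdeg] at h
      exact h
    · rw [pows, Submodule.span_le]
      rintro _ ⟨i, rfl⟩
      rw [SetLike.mem_coe, Subalgebra.mem_toSubmodule]
      exact pow_mem hμmem _
  -- t ≥ 2
  have ht2 : 2 ≤ t := by
    by_contra hlt
    have ht1 : t = 1 := by omega
    have hμp : μ ∈ pows Fq μ 1 := by
      rw [← ht1, ← hFsub]
      exact hμmem
    rw [pows, mem_span_range_iff_exists_fun] at hμp
    obtain ⟨c, hc⟩ := hμp
    apply hμ
    refine ⟨c 0, ?_⟩
    rw [Algebra.algebraMap_eq_smul_one, ← hc]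
    simp
  -- dimension bookkeeping for the chain
  haveI hfdS : FiniteDimensional Fq ↥S := FiniteDimensional.of_finrank_pos (by omega)
  haveI hfdmS : FiniteDimensional Fq ↥(bmul Fq μ S) :=
    FiniteDimensional.of_finrank_pos (by rw [finrank_bmul μ hμ0 S, hk]; omega)
  have hsup : Module.finrank Fq ↥(S ⊔ bmul Fq μ S) = k + 1 := by
    have h := Submodule.finrank_sup_add_finrank_inf_eq S (bmul Fq μ S)
    rw [hk, finrank_bmul μ hμ0 S, hk, hdim] at h
    omega
  haveI hfd : ∀ j, FiniteDimensional Fq ↥(chT Fq μ S j) := fun j =>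
    Submodule.finiteDimensional_of_le (chT_le_self μ S j)
  have hdrop : ∀ j, Module.finrank Fq ↥(chT Fq μ S j) ≤
      Module.finrank Fq ↥(chT Fq μ S (j + 1)) + 1 := by
    intro j
    have hpne : μ ^ (j + 1) ≠ 0 := pow_ne_zero _ hμ0
    set A := chT Fq μ S j with hA
    set B := S.comap (LinearMap.mulLeft Fq (μ ^ (j + 1))) with hB
    have hBe : B = bmul Fq (μ ^ (j + 1))⁻¹ S := comap_mulLeft_eq _ hpne S
    have hfB : Module.finrank Fq ↥B = k := by
      rw [hBe, finrank_bmul _ (inv_ne_zero hpne), hk]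
    haveI hfdB : FiniteDimensional Fq ↥B := FiniteDimensional.of_finrank_pos (by omega)
    have hT1 : chT Fq μ S (j + 1) = A ⊓ B := by
      ext x
      rw [Submodule.mem_inf, mem_chT, hA, mem_chT, hB, Submodule.mem_comap,
        LinearMap.mulLeft_apply]
      constructor
      · intro h
        exact ⟨fun i hi => h i (by omega), h (j + 1) le_rfl⟩
      · rintro ⟨h1, h2⟩ i hi
        rcases Nat.lt_or_ge i (j + 1) with hlt | hge
        · exact h1 i (by omega)
        · have : i = j + 1 := by omega
          subst this
          exact h2
    have hABle : A ⊔ B ≤ (S ⊔ bmul Fq μ S).comap (LinearMap.mulLeft Fq (μ ^ (j + 1))) := by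
      apply sup_le
      · intro x hx
        rw [Submodule.mem_comap, LinearMap.mulLeft_apply]
        apply Submodule.mem_sup_right
        rw [mem_bmul]
        exact ⟨μ ^ j * x, (mem_chT μ S j x).1 hx j le_rfl, by ring⟩
      · exact Submodule.comap_mono le_sup_left
    have hfsup : Module.finrank Fq
        ↥((S ⊔ bmul Fq μ S).comap (LinearMap.mulLeft Fq (μ ^ (j + 1)))) = k + 1 := by
      rw [comap_mulLeft_eq _ hpne, finrank_bmul _ (inv_ne_zero hpne), hsup]
    haveI : FiniteDimensional Fq
        ↥((S ⊔ bmul Fq μ S).comap (LinearMap.mulLeft Fq (μ ^ (j + 1)))) :=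
      FiniteDimensional.of_finrank_pos (by omega)
    have hle2 : Module.finrank Fq ↥(A ⊔ B) ≤ k + 1 :=
      hfsup ▸ Submodule.finrank_mono hABle
    have heq := Submodule.finrank_sup_add_finrank_inf_eq A B
    rw [hfB, ← hT1] at heq
    omega
  have hd1 : Module.finrank Fq ↥(chT Fq μ S 1) = k - 1 := by
    have hinj : Function.Injective (LinearMap.mulLeft Fq μ) := fun a b h => by
      simp only [LinearMap.mulLeft_apply] at h
      exact mul_left_cancel₀ hμ0 h
    have hmap : bmul Fq μ (chT Fq μ S 1) = bmul Fq μ S ⊓ S := by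
      show Submodule.map (LinearMap.mulLeft Fq μ)
        (S ⊓ S.comap (LinearMap.mulLeft Fq μ)) = _
      have hrg : LinearMap.range (LinearMap.mulLeft Fq μ) = ⊤ := by
        rw [LinearMap.range_eq_top]
        intro y
        exact ⟨μ⁻¹ * y, by rw [LinearMap.mulLeft_apply, ← mul_assoc, mul_inv_cancel₀ hμ0, one_mul]⟩
      rw [Submodule.map_inf _ hinj, Submodule.map_comap_eq, hrg, top_inf_eq]
      rfl
    have h := finrank_bmul μ hμ0 (chT Fq μ S 1)
    rw [hmap, inf_comm] at h
    rw [← h, hdim]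
  have hdlow : ∀ j, k ≤ Module.finrank Fq ↥(chT Fq μ S j) + j := by
    intro j
    induction j with
    | zero =>
      have h0 : chT Fq μ S 0 = S := rfl
      rw [h0, hk]
      omega
    | succ j ih =>
      have := hdrop j
      omega
  -- μ^t * x ∈ S whenever x ∈ chT (t-1)
  have hstepT : ∀ x ∈ chT Fq μ S (t - 1), μ * x ∈ chT Fq μ S (t - 1) := by
    intro x hx
    rw [mem_chT] at hx ⊢
    intro i hi
    rw [show μ ^ i * (μ * x) = μ ^ (i + 1) * x by ring]
    rcases Nat.lt_or_ge (i + 1) t with hlt | hge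
    · exact hx (i + 1) (by omega)
    · have hit : i + 1 = t := by omega
      have hμt : μ ^ t ∈ pows Fq μ t := by
        rw [← hFsub, Subalgebra.mem_toSubmodule]
        exact pow_mem hμmem t
      rw [pows, mem_span_range_iff_exists_fun] at hμt
      obtain ⟨c, hc⟩ := hμt
      rw [hit, ← hc, Finset.sum_mul]
      apply Submodule.sum_mem
      intro i' _
      rw [smul_mul_assoc]
      exact Submodule.smul_mem _ _ (hx (i' : ℕ) (by have := i'.isLt; omega))
  set Sbar := chT Fq μ S (t - 1) with hSbar
  have hFstab : ∀ α ∈ Algebra.adjoin Fq {μ}, ∀ s ∈ Sbar, α * s ∈ Sbar := by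
    intro α hα
    induction hα using Algebra.adjoin_induction with
    | mem x hx =>
      rw [Set.mem_singleton_iff] at hx
      subst hx
      exact fun s hs => hstepT s hs
    | algebraMap r =>
      intro s hs
      rw [← Algebra.smul_def]
      exact Submodule.smul_mem _ r hs
    | add x y hx hy ihx ihy =>
      intro s hs
      rw [add_mul]
      exact Submodule.add_mem _ (ihx s hs) (ihy s hs)
    | mul x y hx hy ihx ihy =>
      intro s hs
      rw [mul_assoc]
      exact ihx _ (ihy s hs)
  -- divisibility of the dimension of Sbar
  set E := IntermediateField.adjoin Fq {μ} with hE
  let SbarE : Submodule E Fqn :=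
    { carrier := (Sbar : Set Fqn)
      add_mem' := fun ha hb => Sbar.add_mem ha hb
      zero_mem' := Sbar.zero_mem
      smul_mem' := fun c x hx => by
        have hc : (c : Fqn) ∈ Algebra.adjoin Fq {μ} := (hmemE c).mpr c.2
        have h := hFstab c hc x hx
        rwa [Algebra.smul_def] }
  have hres : Submodule.restrictScalars Fq SbarE = Sbar := by
    ext x
    exact Iff.rfl
  have htdvd : t ∣ Module.finrank Fq ↥Sbar := by
    refine ⟨Module.finrank E ↥SbarE, ?_⟩
    have h : Module.finrank Fq ↥(Submodule.restrictScalars Fq SbarE) =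
        Module.finrank Fq ↥E * Module.finrank E ↥SbarE :=
      (Module.finrank_mul_finrank Fq ↥E ↥SbarE).symm
    rw [← hres, h, hEfr]
  -- pin down the dimension of Sbar
  have hdSb_le : Module.finrank Fq ↥Sbar ≤ k - 1 := by
    haveI := hfd 1
    have h := Submodule.finrank_mono (chT_mono μ S (show 1 ≤ t - 1 by omega))
    rw [hd1] at h
    exact h
  have hdSb_ge := hdlow (t - 1)
  obtain ⟨c, hc⟩ := htdvd
  have hcl : c = l := by
    have h1 : k ≤ t * c + (t - 1) := by rw [← hc]; exact hdSb_ge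
    have h2 : t * c ≤ k - 1 := by rw [← hc]; exact hdSb_le
    have hl : l < c + 1 := by
      have hmul : t * l < t * (c + 1) := by
        have : t * (c + 1) = t * c + t := by ring
        omega
      exact Nat.lt_of_mul_lt_mul_left hmul
    have hcb : c < l + 1 := by
      have hmul : t * c < t * (l + 1) := by
        have : t * (l + 1) = t * l + t := by ring
        omega
      exact Nat.lt_of_mul_lt_mul_left hmul
    omega
  have hdt : Module.finrank Fq ↥Sbar = t * l := by rw [hc, hcl]
  -- m > 0
  have hm0 : 0 < m := by
    by_contra h
    have hm00 : m = 0 := by omega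
    have hSb : Sbar = S := Submodule.eq_of_le_of_finrank_le (chT_le_self μ S (t - 1))
      (by rw [hk, hdt]; omega)
    have h1 : chT Fq μ S 1 = S :=
      le_antisymm (chT_le_self μ S 1)
        (le_trans (le_of_eq hSb.symm) (chT_mono μ S (show 1 ≤ t - 1 by omega)))
    rw [h1, hk] at hd1
    omega
  -- finrank (chT j) = k - j for j ≤ m
  have hdj : ∀ j, j ≤ m → Module.finrank Fq ↥(chT Fq μ S j) + j = k := by
    intro j
    induction j with
    | zero =>
      intro _
      have h0 : chT Fq μ S 0 = S := rfl
      rw [h0, hk]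
      omega
    | succ j ih =>
      intro hj
      haveI := hfd j
      have ihj := ih (by omega)
      by_contra hne
      have hlow := hdlow (j + 1)
      have hmon : Module.finrank Fq ↥(chT Fq μ S (j + 1)) ≤
          Module.finrank Fq ↥(chT Fq μ S j) :=
        Submodule.finrank_mono (chT_succ_le μ S j)
      have heq : Module.finrank Fq ↥(chT Fq μ S (j + 1)) =
          Module.finrank Fq ↥(chT Fq μ S j) := by omega
      have hTeq : chT Fq μ S (j + 1) = chT Fq μ S j :=
        Submodule.eq_of_le_of_finrank_le (chT_succ_le μ S j) heq.symm.le
      have hstab := chT_stab μ S j hTeq (t - 1 - j)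
      have hTt : chT Fq μ S (t - 1) = chT Fq μ S j := by
        rw [show t - 1 = j + (t - 1 - j) by omega]
        exact hstab
      have hdj2 : Module.finrank Fq ↥(chT Fq μ S j) = t * l := by
        rw [← hTt]
        exact hdt
      omega
  have hdm : Module.finrank Fq ↥(chT Fq μ S m) = t * l := by
    have := hdj m le_rfl
    omega
  have hTm : Sbar = chT Fq μ S m :=
    Submodule.eq_of_le_of_finrank_le (chT_mono μ S (show m ≤ t - 1 by omega))
      (by rw [hdm, hdt])
  -- choose b
  have hlt : chT Fq μ S m < chT Fq μ S (m - 1) := by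
    apply lt_of_le_of_ne (chT_mono μ S (show m - 1 ≤ m by omega))
    intro h
    have h1 := hdj m le_rfl
    have h2 := hdj (m - 1) (by omega)
    rw [h] at h1
    omega
  obtain ⟨b, hbm1, hbm⟩ := SetLike.exists_of_lt hlt
  have hb0 : b ≠ 0 := fun h => hbm (h ▸ Submodule.zero_mem _)
  -- t | n and t ≠ n
  have hdvd : t ∣ n := by
    have h := Module.finrank_mul_finrank Fq ↥E Fqn
    rw [hEfr, hn] at h
    exact ⟨_, h.symm⟩
  have hne : t ≠ n := by
    rcases Nat.eq_zero_or_pos n with h0 | hpos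
    · omega
    · haveI : FiniteDimensional Fq Fqn := FiniteDimensional.of_finrank_pos (by omega)
      have hkn : k ≤ n := by
        rw [← hk, ← hn]
        exact Submodule.finrank_le S
      omega
  refine ⟨hm0, ⟨hdvd, hne⟩, Sbar, b, hb0, hFstab, by rw [hdt, mul_comm], ?_, ?_, ?_⟩
  · -- Disjoint (bmul b F) Sbar
    rw [Submodule.disjoint_def]
    intro x hx hxS
    rw [mem_bmul] at hx
    obtain ⟨α, hα, rfl⟩ := hx
    rcases eq_or_ne α 0 with rfl | hαne
    · exact mul_zero b
    · exfalso
      rw [Subalgebra.mem_toSubmodule] at hα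
      have hαinv : α⁻¹ ∈ Algebra.adjoin Fq {μ} :=
        (hmemE _).mpr (IntermediateField.inv_mem _ ((hmemE α).mp hα))
      have hmem : α⁻¹ * (b * α) ∈ Sbar := hFstab _ hαinv _ hxS
      rw [show α⁻¹ * (b * α) = b by field_simp] at hmem
      exact hbm (hTm ▸ hmem)
  · -- Disjoint Sbar (bmul b (pows m))
    have hple : pows Fq μ m ≤ Subalgebra.toSubmodule (Algebra.adjoin Fq {μ}) := by
      rw [pows, Submodule.span_le]
      rintro _ ⟨i, rfl⟩
      rw [SetLike.mem_coe, Subalgebra.mem_toSubmodule]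
      exact pow_mem hμmem _
    have hd1' : Disjoint Sbar (bmul Fq b (Subalgebra.toSubmodule (Algebra.adjoin Fq {μ}))) := by
      rw [Submodule.disjoint_def]
      intro x hx hxb
      rw [mem_bmul] at hxb
      obtain ⟨α, hα, rfl⟩ := hxb
      rcases eq_or_ne α 0 with rfl | hαne
      · exact mul_zero b
      · exfalso
        rw [Subalgebra.mem_toSubmodule] at hα
        have hαinv : α⁻¹ ∈ Algebra.adjoin Fq {μ} :=
          (hmemE _).mpr (IntermediateField.inv_mem _ ((hmemE α).mp hα))
        have hmem : α⁻¹ * (b * α) ∈ Sbar := hFstab _ hαinv _ hx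
        rw [show α⁻¹ * (b * α) = b by field_simp] at hmem
        exact hbm (hTm ▸ hmem)
    exact hd1'.mono_right (Submodule.map_mono hple)
  · -- S = Sbar ⊔ bmul b (pows m)
    have hble : bmul Fq b (pows Fq μ m) ≤ S := by
      rw [bmul, pows, Submodule.map_span, Submodule.span_le]
      rintro _ ⟨_, ⟨i, rfl⟩, rfl⟩
      rw [SetLike.mem_coe, LinearMap.mulLeft_apply, mul_comm]
      exact (mem_chT μ S (m - 1) b).1 hbm1 (i : ℕ) (by have := i.isLt; omega)
    have hSble : Sbar ≤ S := chT_le_self μ S (t - 1)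
    haveI hfdSbar : FiniteDimensional Fq ↥Sbar := hfd (t - 1)
    haveI hfdb : FiniteDimensional Fq ↥(bmul Fq b (pows Fq μ m)) :=
      FiniteDimensional.of_finrank_pos
        (by rw [finrank_bmul b hb0, hfp m hmt.le]; omega)
    have hdisj2 : Disjoint Sbar (bmul Fq b (pows Fq μ m)) := by
      have hple : pows Fq μ m ≤ Subalgebra.toSubmodule (Algebra.adjoin Fq {μ}) := by
        rw [pows, Submodule.span_le]
        rintro _ ⟨i, rfl⟩
        rw [SetLike.mem_coe, Subalgebra.mem_toSubmodule]
        exact pow_mem hμmem _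
      have hd1' : Disjoint Sbar
          (bmul Fq b (Subalgebra.toSubmodule (Algebra.adjoin Fq {μ}))) := by
        rw [Submodule.disjoint_def]
        intro x hx hxb
        rw [mem_bmul] at hxb
        obtain ⟨α, hα, rfl⟩ := hxb
        rcases eq_or_ne α 0 with rfl | hαne
        · exact mul_zero b
        · exfalso
          rw [Subalgebra.mem_toSubmodule] at hα
          have hαinv : α⁻¹ ∈ Algebra.adjoin Fq {μ} :=
            (hmemE _).mpr (IntermediateField.inv_mem _ ((hmemE α).mp hα))
          have hmem : α⁻¹ * (b * α) ∈ Sbar := hFstab _ hαinv _ hx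
          rw [show α⁻¹ * (b * α) = b by field_simp] at hmem
          exact hbm (hTm ▸ hmem)
      exact hd1'.mono_right (Submodule.map_mono hple)
    have hfr : Module.finrank Fq ↥(Sbar ⊔ bmul Fq b (pows Fq μ m)) = k := by
      have h := Submodule.finrank_sup_add_finrank_inf_eq Sbar (bmul Fq b (pows Fq μ m))
      rw [hdisj2.eq_bot, finrank_bot, hdt, finrank_bmul b hb0, hfp m hmt.le] at h
      omega
    exact (Submodule.eq_of_le_of_finrank_le (sup_le hSble hble) (by rw [hk, hfr])).symm
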